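/- Let S(ρ) = ∑_{μ∈F} K_μ ρ K_μ^† be a trace-preserving Kraus-form map on complex matrices indexed by Fin n ⊕ Fin m satisfying: (i) P_A S(ρ) P_A = S(ρ) for all ρ, and (ii) there is an n×n unitary U_A with S(ρ) equal to the block embedding of U_A ρ_A U_A^† whenever P_A ρ P_A = ρ. Let ψ be a unit vector with components ψ_A ∈ ℂ^n and ψ_Ā ∈ ℂ^m. If S applied to the block embedding of ψ_Ā ψ_Ā^† is a nonnegative real scalar multiple of the block embedding of (U_A ψ_A)(U_A ψ_A)^†, then S(ψ ψ^†) is a pure state, i.e. S(ψ ψ^†) = v v^† where v is the block embedding of the unit vector U_A ψ_A / ‖ψ_A‖ (assuming ψ_A ≠ 0; if ψ_A = 0 the conclusion is that S(ψψ^†) is the scalar multiple itself, which is pure of the stated form for some unit vector). -/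

import Mathlib

open Matrix BigOperators

/-- The orthogonal projection onto the first (`A`) block. -/
noncomputable def projA (n m : ℕ) : Matrix (Fin n ⊕ Fin m) (Fin n ⊕ Fin m) ℂ :=
  Matrix.fromBlocks 1 0 0 0


lemma kraus_rank_one {ι κ : Type*} [Fintype ι] (K : Matrix κ ι ℂ) (x : ι → ℂ) :
    K * Matrix.vecMulVec x (star x) * Kᴴ = Matrix.vecMulVec (K *ᵥ x) (star (K *ᵥ x)) := by
  rw [vecMulVec_eq (Fin 1), vecMulVec_eq (Fin 1), star_mulVec, replicateRow_vecMul, replicateCol_mulVec,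
    Matrix.mul_assoc, Matrix.mul_assoc, Matrix.mul_assoc]

lemma vecMulVec_mulVec' {ι : Type*} [Fintype ι] (x y z : ι → ℂ) :
    Matrix.vecMulVec x y *ᵥ z = (y ⬝ᵥ z) • x := by
  funext i
  simp only [Matrix.mulVec, Matrix.vecMulVec_apply, dotProduct, Pi.smul_apply, smul_eq_mul,
    Finset.sum_mul]
  exact Finset.sum_congr rfl fun k _ => by ring

lemma qform {ι : Type*} [Fintype ι] (x z : ι → ℂ) :
    star z ⬝ᵥ (Matrix.vecMulVec x (star x) *ᵥ z) =
      ((star x ⬝ᵥ z) * star (star x ⬝ᵥ z)) := by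
  rw [vecMulVec_mulVec', dotProduct_smul, star_dotProduct (v := z) (w := x)]
  simp [mul_comm]

lemma dot_star_self_eq {ι : Type*} [Fintype ι] (v : ι → ℂ) :
    star v ⬝ᵥ v = ((∑ i, Complex.normSq (v i) : ℝ) : ℂ) := by
  push_cast
  simp [dotProduct, Complex.normSq_eq_conj_mul_self]

lemma dot_star_self_zero {ι : Type*} [Fintype ι] (v : ι → ℂ) :
    star v ⬝ᵥ v = 0 ↔ v = 0 := by
  rw [dot_star_self_eq, Complex.ofReal_eq_zero]
  rw [Finset.sum_eq_zero_iff_of_nonneg (fun i _ => Complex.normSq_nonneg _)]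
  constructor
  · intro h; funext i
    simpa [Complex.normSq_eq_zero] using h i (Finset.mem_univ i)
  · intro h i _; simp [h]

lemma span_of_perp {ι : Type*} [Fintype ι] (x u : ι → ℂ)
    (h : ∀ z, star u ⬝ᵥ z = 0 → star x ⬝ᵥ z = 0) : ∃ e : ℂ, x = e • u := by
  by_cases hu : u = 0
  · refine ⟨0, ?_⟩
    have hx := h x (by simp [hu])
    rw [dot_star_self_zero] at hx
    simp [hx]
  · set s : ℂ := star u ⬝ᵥ u with hs_def
    have hs : s ≠ 0 := fun h0 => hu ((dot_star_self_zero u).mp h0)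
    set z : ι → ℂ := s • x - (star u ⬝ᵥ x) • u with hz_def
    have huz : star u ⬝ᵥ z = 0 := by
      simp only [hz_def, dotProduct_sub, dotProduct_smul, smul_eq_mul, ← hs_def]
      ring
    have hxz := h z huz
    have hzz : star z ⬝ᵥ z = 0 := by
      have hstz : star z = star s • star x - star (star u ⬝ᵥ x) • star u := by
        simp [hz_def, star_sub, star_smul]
      rw [hstz, sub_dotProduct, smul_dotProduct, smul_dotProduct, hxz, huz]
      simp
    rw [dot_star_self_zero] at hzz
    refine ⟨(star u ⬝ᵥ x) / s, ?_⟩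
    have hsx : s • x = (star u ⬝ᵥ x) • u := sub_eq_zero.mp (hz_def ▸ hzz)
    funext i
    have := congrFun hsx i
    simp only [Pi.smul_apply, smul_eq_mul] at this ⊢
    field_simp
    linear_combination this
open Matrix BigOperators

lemma sum_mulVec' {F ι : Type*} [Fintype F] [Fintype ι] (M : F → Matrix ι ι ℂ) (z : ι → ℂ) :
    (∑ μ, M μ) *ᵥ z = ∑ μ, M μ *ᵥ z := by
  funext i
  simp only [Finset.sum_apply, Matrix.mulVec, dotProduct, Matrix.sum_apply, Finset.sum_mul]
  exact Finset.sum_comm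

lemma dotProduct_sum' {F ι : Type*} [Fintype F] [Fintype ι] (v : ι → ℂ) (w : F → ι → ℂ) :
    v ⬝ᵥ (∑ μ, w μ) = ∑ μ, v ⬝ᵥ w μ := by
  simp only [dotProduct, Finset.sum_apply, Finset.mul_sum]
  exact Finset.sum_comm

lemma terms_in_span {F ι : Type*} [Fintype F] [Fintype ι] (y : F → ι → ℂ) (u : ι → ℂ) (c : ℂ)
    (h : ∑ μ, Matrix.vecMulVec (y μ) (star (y μ)) = c • Matrix.vecMulVec u (star u)) :
    ∀ μ, ∃ e : ℂ, y μ = e • u := by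
  intro μ
  apply span_of_perp
  intro z hz
  have hq := congrArg (fun M => star z ⬝ᵥ (M *ᵥ z)) h
  rw [sum_mulVec', dotProduct_sum'] at hq
  rw [Matrix.smul_mulVec, dotProduct_smul, vecMulVec_mulVec', dotProduct_smul, hz] at hq
  simp only [qform] at hq
  simp only [zero_smul, smul_zero, smul_eq_mul, mul_zero, zero_mul] at hq
  -- hq : ∑ μ, (star (y μ) ⬝ᵥ z) * star (star (y μ) ⬝ᵥ z) = 0
  have hre : ∑ μ, Complex.normSq (star (y μ) ⬝ᵥ z) = 0 := by
    have h2 : ∑ μ, ((Complex.normSq (star (y μ) ⬝ᵥ z) : ℝ) : ℂ) = 0 := by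
      rw [← hq]
      exact Finset.sum_congr rfl fun i _ => (Complex.mul_conj _).symm ▸ rfl
    have := congrArg Complex.re h2
    simpa [Complex.re_sum] using this
  have := (Finset.sum_eq_zero_iff_of_nonneg
    (fun i _ => Complex.normSq_nonneg (star (y i) ⬝ᵥ z))).mp hre μ (Finset.mem_univ μ)
  exact Complex.normSq_eq_zero.mp this

lemma trace_vecMulVec' {ι : Type*} [Fintype ι] (x y : ι → ℂ) :
    Matrix.trace (Matrix.vecMulVec x y) = y ⬝ᵥ x := by
  simp [Matrix.trace, Matrix.diag, Matrix.vecMulVec_apply, dotProduct, mul_comm]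


lemma embed_fst {n m : ℕ} (p : Fin n → ℂ) :
    Matrix.fromBlocks (Matrix.vecMulVec p (star p)) 0 0 0 =
      Matrix.vecMulVec (Sum.elim p (0 : Fin m → ℂ)) (star (Sum.elim p (0 : Fin m → ℂ))) := by
  ext i j
  cases i <;> cases j <;> simp [Matrix.vecMulVec_apply]

lemma embed_snd {n m : ℕ} (p : Fin m → ℂ) :
    Matrix.fromBlocks 0 0 0 (Matrix.vecMulVec p (star p)) =
      Matrix.vecMulVec (Sum.elim (0 : Fin n → ℂ) p) (star (Sum.elim (0 : Fin n → ℂ) p)) := by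
  ext i j
  cases i <;> cases j <;> simp [Matrix.vecMulVec_apply]

lemma projA_conj {n m : ℕ} (X : Matrix (Fin n) (Fin n) ℂ) :
    projA n m * Matrix.fromBlocks X 0 0 0 * projA n m = Matrix.fromBlocks X 0 0 0 := by
  simp [projA, Matrix.fromBlocks_multiply]

lemma vecMulVec_smul_star {ι : Type*} (e : ℂ) (u : ι → ℂ) :
    Matrix.vecMulVec (e • u) (star (e • u)) =
      (e * star e) • Matrix.vecMulVec u (star u) := by
  ext i j
  simp only [Matrix.vecMulVec_apply, Pi.smul_apply, Pi.star_apply, Matrix.smul_apply,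
    smul_eq_mul, star_mul', RCLike.star_def]
  ring

/-- conversely, if the channel output on the `Ā`-block embedding
of `ψ_Ā ψ_Āᴴ` is a nonnegative scalar multiple of the `A`-block embedding of
`(U_A ψ_A)(U_A ψ_A)ᴴ`, then `S(ψψᴴ)` is pure: when `ψ_A ≠ 0` it equals `v vᴴ`
with `v` the block embedding of `U_A ψ_A / ‖ψ_A‖`, and when `ψ_A = 0` it
equals the scalar multiple itself. -/
theorem proportional_implies_pure_output {n m : ℕ} {F : Type*} [Fintype F]
    (K : F → Matrix (Fin n ⊕ Fin m) (Fin n ⊕ Fin m) ℂ)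
    (S : Matrix (Fin n ⊕ Fin m) (Fin n ⊕ Fin m) ℂ →
         Matrix (Fin n ⊕ Fin m) (Fin n ⊕ Fin m) ℂ)
    (hS : ∀ ρ, S ρ = ∑ μ, K μ * ρ * (K μ)ᴴ)
    (htp : ∑ μ, (K μ)ᴴ * K μ = 1)
    (hsupp : ∀ ρ, projA n m * S ρ * projA n m = S ρ)
    (UA : Matrix (Fin n) (Fin n) ℂ)
    (hUA : UA ∈ Matrix.unitaryGroup (Fin n) ℂ)
    (hdfs : ∀ ρ : Matrix (Fin n ⊕ Fin m) (Fin n ⊕ Fin m) ℂ,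
      projA n m * ρ * projA n m = ρ →
      S ρ = Matrix.fromBlocks (UA * ρ.toBlocks₁₁ * UAᴴ) 0 0 0)
    (ψ : Fin n ⊕ Fin m → ℂ)
    (hψ : star ψ ⬝ᵥ ψ = 1)
    (a : ℝ) (ha : 0 ≤ a)
    (hprop : S (Matrix.fromBlocks 0 0 0
          (Matrix.vecMulVec (ψ ∘ Sum.inr) (star (ψ ∘ Sum.inr)))) =
      (a : ℂ) • Matrix.fromBlocks
          (Matrix.vecMulVec (UA *ᵥ (ψ ∘ Sum.inl)) (star (UA *ᵥ (ψ ∘ Sum.inl))))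
          0 0 0) :
    (ψ ∘ Sum.inl ≠ 0 →
      S (Matrix.vecMulVec ψ (star ψ)) =
        Matrix.vecMulVec
          (Sum.elim (((Real.sqrt ((star (ψ ∘ Sum.inl) ⬝ᵥ (ψ ∘ Sum.inl)).re) : ℂ)⁻¹ •
              (UA *ᵥ (ψ ∘ Sum.inl))) : Fin n → ℂ) (0 : Fin m → ℂ))
          (star (Sum.elim (((Real.sqrt ((star (ψ ∘ Sum.inl) ⬝ᵥ (ψ ∘ Sum.inl)).re) : ℂ)⁻¹ •
              (UA *ᵥ (ψ ∘ Sum.inl))) : Fin n → ℂ) (0 : Fin m → ℂ)))) ∧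
    (ψ ∘ Sum.inl = 0 →
      S (Matrix.vecMulVec ψ (star ψ)) =
        (a : ℂ) • Matrix.fromBlocks
          (Matrix.vecMulVec (UA *ᵥ (ψ ∘ Sum.inl)) (star (UA *ᵥ (ψ ∘ Sum.inl))))
          0 0 0) ∧
    (∃ v : Fin n ⊕ Fin m → ℂ, star v ⬝ᵥ v = 1 ∧
      S (Matrix.vecMulVec ψ (star ψ)) = Matrix.vecMulVec v (star v)) := by
  classical
  set φA := ψ ∘ Sum.inl with hφA
  set φB := ψ ∘ Sum.inr with hφB
  set u : Fin n ⊕ Fin m → ℂ := Sum.elim (UA *ᵥ φA) 0 with hu_def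
  set v : Fin n ⊕ Fin m → ℂ := Sum.elim φA 0 with hv_def
  set w : Fin n ⊕ Fin m → ℂ := Sum.elim 0 φB with hw_def
  have hψvw : ψ = v + w := by
    funext i; cases i <;> simp [hv_def, hw_def, hφA, hφB]
  -- trace preservation
  have htrace : ∀ ρ : Matrix (Fin n ⊕ Fin m) (Fin n ⊕ Fin m) ℂ, (S ρ).trace = ρ.trace := by
    intro ρ
    rw [hS, Matrix.trace_sum]
    have h1 : ∀ μ : F, (K μ * ρ * (K μ)ᴴ).trace = ((K μ)ᴴ * K μ * ρ).trace := by
      intro μ; rw [Matrix.trace_mul_cycle]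
    rw [Finset.sum_congr rfl fun μ _ => h1 μ, ← Matrix.trace_sum, ← Finset.sum_mul, htp, one_mul]
  -- S on the A-block embedding
  have hSv : S (Matrix.vecMulVec v (star v)) = Matrix.vecMulVec u (star u) := by
    have h1 : Matrix.vecMulVec v (star v) =
        Matrix.fromBlocks (Matrix.vecMulVec φA (star φA)) 0 0 0 := (embed_fst φA).symm
    rw [h1, hdfs _ (projA_conj _)]
    simp only [Matrix.toBlocks_fromBlocks₁₁]
    rw [kraus_rank_one UA φA]
    exact embed_fst _
  -- S on the Ā-block embedding
  have hSw : S (Matrix.vecMulVec w (star w)) = (a : ℂ) • Matrix.vecMulVec u (star u) := by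
    have h1 : Matrix.vecMulVec w (star w) =
        Matrix.fromBlocks 0 0 0 (Matrix.vecMulVec φB (star φB)) := (embed_snd φB).symm
    rw [h1, hprop, embed_fst]
  -- Kraus sums
  have hKv : ∑ μ, Matrix.vecMulVec (K μ *ᵥ v) (star (K μ *ᵥ v)) =
      (1 : ℂ) • Matrix.vecMulVec u (star u) := by
    rw [one_smul, ← hSv, hS]
    exact Finset.sum_congr rfl fun μ _ => (kraus_rank_one _ _).symm
  have hKw : ∑ μ, Matrix.vecMulVec (K μ *ᵥ w) (star (K μ *ᵥ w)) =
      (a : ℂ) • Matrix.vecMulVec u (star u) := by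
    rw [← hSw, hS]
    exact Finset.sum_congr rfl fun μ _ => (kraus_rank_one _ _).symm
  -- norms
  have hUA1 : UAᴴ * UA = 1 := by
    have := hUA.1
    rwa [Matrix.star_eq_conjTranspose] at this
  have hstaru : star u = Sum.elim (star (UA *ᵥ φA)) (0 : Fin m → ℂ) := by
    funext i; cases i <;> simp [hu_def]
  have hut : star u ⬝ᵥ u = star φA ⬝ᵥ φA := by
    rw [hstaru, hu_def]
    rw [sumElim_dotProduct_sumElim]
    rw [Matrix.star_mulVec, dotProduct_zero, add_zero, ← Matrix.dotProduct_mulVec,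
      Matrix.mulVec_mulVec, hUA1, Matrix.one_mulVec]
  have hstarψ : star ψ = Sum.elim (star φA) (star φB) := by
    funext i; cases i <;> rfl
  have hψelim : ψ = Sum.elim φA φB := by
    funext i; cases i <;> rfl
  have hsum1 : star φA ⬝ᵥ φA + star φB ⬝ᵥ φB = 1 := by
    rw [← sumElim_dotProduct_sumElim, ← hstarψ, ← hψelim, hψ]
  -- φA cannot be zero
  have hA_ne : φA ≠ 0 := by
    intro h0
    have hu0 : u = 0 := by
      funext i; cases i <;> simp [hu_def, h0]
    have htr := htrace (Matrix.vecMulVec w (star w))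
    rw [hSw, hu0] at htr
    have hL : Matrix.trace ((a : ℂ) • Matrix.vecMulVec (0 : Fin n ⊕ Fin m → ℂ)
        (star (0 : Fin n ⊕ Fin m → ℂ))) = 0 := by
      simp [Matrix.vecMulVec_apply, Matrix.trace]
    rw [hL, trace_vecMulVec'] at htr
    have hB1 : star φB ⬝ᵥ φB = 1 := by
      have : star φA ⬝ᵥ φA = 0 := by simp [h0]
      rwa [this, zero_add] at hsum1
    have : star w ⬝ᵥ w = 1 := by
      have hsw : star w = Sum.elim (0 : Fin n → ℂ) (star φB) := by
        funext i; cases i <;> simp [hw_def]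
      rw [hsw, hw_def, sumElim_dotProduct_sumElim, hB1]
      simp
    rw [this] at htr
    exact one_ne_zero htr.symm
  -- scalars
  set t : ℂ := star φA ⬝ᵥ φA with ht_def
  have ht0 : t ≠ 0 := fun h => hA_ne ((dot_star_self_zero φA).mp h)
  have hts : t = ((∑ i, Complex.normSq (φA i) : ℝ) : ℂ) := ht_def.trans (dot_star_self_eq φA)
  have htre : ((t.re : ℝ) : ℂ) = t := by
    rw [hts]; simp
  have htre_nonneg : 0 ≤ t.re := by
    rw [hts]
    simpa using Finset.sum_nonneg fun i _ => Complex.normSq_nonneg (φA i)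
  obtain ⟨d, hd'⟩ := Classical.axiomOfChoice (terms_in_span (fun μ => K μ *ᵥ v) u 1 hKv)
  obtain ⟨c, hc'⟩ := Classical.axiomOfChoice (terms_in_span (fun μ => K μ *ᵥ w) u (a : ℂ) hKw)
  have hd : ∀ μ, K μ *ᵥ v = d μ • u := fun μ => hd' μ
  have hc : ∀ μ, K μ *ᵥ w = c μ • u := fun μ => hc' μ
  -- main computation
  set β : ℂ := ∑ μ, (d μ + c μ) * star (d μ + c μ) with hβ_def
  have hmain : S (Matrix.vecMulVec ψ (star ψ)) = β • Matrix.vecMulVec u (star u) := by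
    rw [hS]
    have h2 : ∀ μ : F, K μ * Matrix.vecMulVec ψ (star ψ) * (K μ)ᴴ =
        ((d μ + c μ) * star (d μ + c μ)) • Matrix.vecMulVec u (star u) := by
      intro μ
      rw [kraus_rank_one]
      have h3 : K μ *ᵥ ψ = (d μ + c μ) • u := by
        rw [hψvw, Matrix.mulVec_add, hd μ, hc μ, add_smul]
      rw [h3, vecMulVec_smul_star]
    rw [Finset.sum_congr rfl fun μ _ => h2 μ, ← Finset.sum_smul]
  -- determine β from trace
  have hβt : β * t = 1 := by
    have htr := htrace (Matrix.vecMulVec ψ (star ψ))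
    rw [hmain, trace_vecMulVec', hψ, Matrix.trace_smul, trace_vecMulVec', hut,
      smul_eq_mul] at htr
    exact htr
  have hβ : β = t⁻¹ := by
    field_simp
    linear_combination hβt
  -- the normalized vector
  set c0 : ℂ := ((Real.sqrt t.re : ℝ) : ℂ)⁻¹ with hc0_def
  have hc0star : star c0 = c0 := by
    simp [hc0_def, Complex.conj_ofReal]
  have hc0sq : c0 * star c0 = t⁻¹ := by
    rw [hc0star, hc0_def, ← mul_inv, ← Complex.ofReal_mul,
      Real.mul_self_sqrt htre_nonneg, htre]
  have hElim : Sum.elim (c0 • (UA *ᵥ φA)) (0 : Fin m → ℂ) = c0 • u := by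
    funext i; cases i <;> simp [hu_def]
  have hfinal : S (Matrix.vecMulVec ψ (star ψ)) =
      Matrix.vecMulVec (Sum.elim (c0 • (UA *ᵥ φA)) (0 : Fin m → ℂ))
        (star (Sum.elim (c0 • (UA *ᵥ φA)) (0 : Fin m → ℂ))) := by
    rw [hElim, vecMulVec_smul_star, hc0sq, hmain, hβ]
  refine ⟨fun _ => hfinal, fun h0 => absurd h0 hA_ne,
    ⟨Sum.elim (c0 • (UA *ᵥ φA)) (0 : Fin m → ℂ), ?_, hfinal⟩⟩
  rw [hElim, star_smul, smul_dotProduct, dotProduct_smul, hut, smul_eq_mul,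
    smul_eq_mul, ← mul_assoc, mul_comm (star c0) c0, hc0sq, inv_mul_cancel₀ ht0]
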